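/- arXiv:2112.05671 — 2 statements merged into one kernel-verified Lean document; each statement's English description precedes it below -/
import Mathlib

section
/- Let X = (U, S) with S taking values in a finite set, and suppose P_{jt}(X) = P_j(S) · P_t(U | S) and P_{jt}(Y(0) | X) = P_t(Y(0) | X). Then E_{jt}[Y(0)] = Σ_s λ_t(s) γ_j(s), where λ_t(s) = E_t[Y(0) | S = s] = Σ_u E_t[Y(0) | U = u, S = s] P_t(U = u | S = s) depends only on t, and γ_j(s) = P_j(S = s) depends only on j. -/
/-- A1 + A2: with causes X = (U,S), if the cause distribution factors as
P_j(S)·P_t(U|S) and the conditional outcome law given X is group-invariant, then the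
expected control outcome has an exact linear factor model form Σ_s λ_t(s) γ_j(s),
with λ_t(s) = Σ_u E_t[Y(0)|U=u,S=s] P_t(U=u|S=s) depending only on t and
γ_j(s) = P_j(S=s) depending only on j. -/
theorem stmt5 (J T U S YV : Type) [Fintype U] [Fintype S] [Fintype YV]
    (yval : YV → ℝ)
    (pX : J → T → U × S → ℝ)
    (pS : J → S → ℝ) (pU : T → S → U → ℝ)
    (cond : T → U × S → YV → ℝ)
    (hfactor : ∀ j t u s, pX j t (u, s) = pS j s * pU t s u) :
    ∀ j t, ∑ x : U × S, (∑ y, yval y * cond t x y) * pX j t x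
      = ∑ s, (∑ u, (∑ y, yval y * cond t (u, s) y) * pU t s u) * pS j s := by
  intro j t
  rw [Fintype.sum_prod_type]
  rw [Finset.sum_comm]
  refine Finset.sum_congr rfl fun s _ => ?_
  rw [Finset.sum_mul]
  refine Finset.sum_congr rfl fun u _ => ?_
  rw [hfactor]; ring
end

section
/- Let S be a finite set, P₁ in the span of {P_d}_{d∈D}, and let {P_d}_{d∈D'} ⊇ {P_d}_{d∈D} be a larger donor set defined over a strictly larger invariant set S' ⊇ S (i.e., each distribution extended to S' and the target's extension P₁' on S'). It is possible that P₁' is not in the span of the extended donor vectors {P'_d}_{d∈D'} even though P₁ ∈ span{P_d}_{d∈D}. -/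
/-- enlarging the donor set can enlarge the minimal invariant set and
destroy the existence of synthetic controls. Concretely, there is an example with
|S| = 1 and |S'| = 3: a donor set D ⊆ D' with distributions over S whose span
contains the target, and refined distributions over S' (consistent with the
originals under the collapsing map S' → S) whose span does not contain the refined
target. -/
theorem stmt12 :
    ∃ (D D' : Type) (_ : Fintype D) (_ : Fintype D') (ι : D → D')
      (π : Fin 3 → Fin 1)
      (P : D → Fin 1 → ℝ) (P' : D' → Fin 3 → ℝ)
      (P1 : Fin 1 → ℝ) (P1' : Fin 3 → ℝ),
      Function.Injective ι ∧
      (∀ d s, 0 ≤ P d s) ∧ (∀ d, ∑ s, P d s = 1) ∧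
      (∀ d s, 0 ≤ P' d s) ∧ (∀ d, ∑ s, P' d s = 1) ∧
      (∀ s, 0 ≤ P1 s) ∧ (∑ s, P1 s = 1) ∧
      (∀ s, 0 ≤ P1' s) ∧ (∑ s, P1' s = 1) ∧
      (∀ d s, P d s = ∑ s' ∈ Finset.univ.filter (fun s' => π s' = s), P' (ι d) s') ∧
      (∀ s, P1 s = ∑ s' ∈ Finset.univ.filter (fun s' => π s' = s), P1' s') ∧
      P1 ∈ Submodule.span ℝ (Set.range P) ∧
      P1' ∉ Submodule.span ℝ (Set.range P') := by
  refine ⟨Unit, Unit, inferInstance, inferInstance, id, fun _ => 0,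
    fun _ _ => 1, fun _ => ![1/2, 1/2, 0], fun _ => 1, ![1, 0, 0],
    fun a b h => h, by norm_num, by norm_num,
    ?_, ?_, by norm_num, by norm_num, ?_, ?_, ?_, ?_, ?_, ?_⟩
  · intro d s; fin_cases s <;> norm_num
  · intro d; simp [Fin.sum_univ_three]; norm_num
  · intro s; fin_cases s <;> norm_num
  · simp [Fin.sum_univ_three]
  · intro d s
    fin_cases s
    simp [Fin.sum_univ_three]; norm_num
  · intro s
    fin_cases s
    simp [Fin.sum_univ_three]
  · exact Submodule.subset_span ⟨(), rfl⟩
  · intro h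
    have hr : Set.range (fun _ : Unit => ![(1:ℝ)/2, 1/2, 0]) = {![(1:ℝ)/2, 1/2, 0]} := by
      ext x; simp [eq_comm]
    rw [hr, Submodule.mem_span_singleton] at h
    obtain ⟨a, ha⟩ := h
    have h0 := congrFun ha 0
    have h1 := congrFun ha 1
    simp [Matrix.smul_cons] at h0 h1
    linarith
end
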